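/- Let $A \in \mathbb{R}^{m \times n}$ have full column rank, $B \in \mathbb{R}^{n \times n}$ be invertible with $C = BB^T$, and let $x^*$ solve $Ax=b$. Suppose rows are sampled with probability proportional to $\|B^T a_j\|^2$ and the APK update $x_{k+1} = x_k + \frac{b_j - a_j^T x_k}{a_j^T C a_j} C a_j$ is applied starting from $x_{t_0}$. Then $\mathbb{E}\|x_k - x^*\|^2 \le \lambda_{\max}(C)\left(1 - \frac{\sigma_{\min}(AB)^2}{\|AB\|_F^2}\right)^{k - t_0} \|B^{-1}(x_{t_0} - x^*)\|^2$. -/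

import Mathlib

open scoped RealInnerProductSpace Matrix

noncomputable def mulE {m n : ℕ} (M : Matrix (Fin m) (Fin n) ℝ) (v : EuclideanSpace ℝ (Fin n)) :
    EuclideanSpace ℝ (Fin m) := (WithLp.equiv 2 _).symm (M.mulVec ((WithLp.equiv 2 _) v))

noncomputable def rowE {m n : ℕ} (M : Matrix (Fin m) (Fin n) ℝ) (j : Fin m) :
    EuclideanSpace ℝ (Fin n) := (WithLp.equiv 2 _).symm (M j)

/-- The smallest singular value of `A`, as the infimum of `‖Av‖` over unit vectors. -/
noncomputable def sminE {m n : ℕ} (A : Matrix (Fin m) (Fin n) ℝ) : ℝ :=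
  ⨅ v : {v : EuclideanSpace ℝ (Fin n) // ‖v‖ = 1}, ‖mulE A (v : EuclideanSpace ℝ (Fin n))‖

/-- The largest eigenvalue of a symmetric matrix `C`, as the supremum of the
Rayleigh quotient over unit vectors. -/
noncomputable def lmaxE {n : ℕ} (C : Matrix (Fin n) (Fin n) ℝ) : ℝ :=
  ⨆ v : {v : EuclideanSpace ℝ (Fin n) // ‖v‖ = 1},
    ⟪(v : EuclideanSpace ℝ (Fin n)), mulE C (v : EuclideanSpace ℝ (Fin n))⟫

/-- One APK step using row `j` with preconditioner `C`. -/
noncomputable def apkStep {m n : ℕ} (A : Matrix (Fin m) (Fin n) ℝ)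
    (C : Matrix (Fin n) (Fin n) ℝ) (b : Fin m → ℝ) (j : Fin m)
    (x : EuclideanSpace ℝ (Fin n)) : EuclideanSpace ℝ (Fin n) :=
  x + ((b j - ⟪rowE A j, x⟫) / ⟪rowE A j, mulE C (rowE A j)⟫) • mulE C (rowE A j)

/-- The APK iterates determined by a sequence `ω` of chosen rows, starting at `xt0`. -/
noncomputable def apkIter {m n : ℕ} (A : Matrix (Fin m) (Fin n) ℝ)
    (C : Matrix (Fin n) (Fin n) ℝ) (b : Fin m → ℝ) (xt0 : EuclideanSpace ℝ (Fin n)) :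
    (k : ℕ) → (Fin k → Fin m) → EuclideanSpace ℝ (Fin n)
  | 0, _ => xt0
  | (k + 1), ω => apkStep A C b (ω (Fin.last k)) (apkIter A C b xt0 k (fun i => ω i.castSucc))

variable {m n p : ℕ}

lemma inner_euc (x y : EuclideanSpace ℝ (Fin n)) : ⟪x, y⟫ = ∑ i, x i * y i := by
  simp [PiLp.inner_apply, RCLike.inner_apply, conj_trivial]
  exact Finset.sum_congr rfl fun i _ => mul_comm _ _

lemma mulE_apply (M : Matrix (Fin m) (Fin n) ℝ) (v : EuclideanSpace ℝ (Fin n)) (j : Fin m) :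
    mulE M v j = ∑ i, M j i * v i := by
  simp [mulE, Matrix.mulVec, dotProduct]

lemma inner_rowE (M : Matrix (Fin m) (Fin n) ℝ) (x : EuclideanSpace ℝ (Fin n)) (j : Fin m) :
    ⟪rowE M j, x⟫ = mulE M x j := by
  simp [inner_euc, mulE_apply, rowE]

lemma mulE_mul (M : Matrix (Fin m) (Fin n) ℝ) (N : Matrix (Fin n) (Fin p) ℝ)
    (v : EuclideanSpace ℝ (Fin p)) : mulE (M * N) v = mulE M (mulE N v) := by
  simp [mulE, Matrix.mulVec_mulVec]

lemma mulE_one (v : EuclideanSpace ℝ (Fin n)) : mulE (1 : Matrix (Fin n) (Fin n) ℝ) v = v := by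
  simp [mulE]

lemma mulE_zero (M : Matrix (Fin m) (Fin n) ℝ) : mulE M (0 : EuclideanSpace ℝ (Fin n)) = 0 := by
  ext j; simp [mulE_apply]

lemma mulE_add (M : Matrix (Fin m) (Fin n) ℝ) (u v : EuclideanSpace ℝ (Fin n)) :
    mulE M (u + v) = mulE M u + mulE M v := by
  ext j; simp [mulE_apply, mul_add, Finset.sum_add_distrib]

lemma mulE_sub (M : Matrix (Fin m) (Fin n) ℝ) (u v : EuclideanSpace ℝ (Fin n)) :
    mulE M (u - v) = mulE M u - mulE M v := by
  ext j; simp [mulE_apply, mul_sub, Finset.sum_sub_distrib]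

lemma mulE_smul (M : Matrix (Fin m) (Fin n) ℝ) (c : ℝ) (v : EuclideanSpace ℝ (Fin n)) :
    mulE M (c • v) = c • mulE M v := by
  ext j; simp only [mulE_apply, PiLp.smul_apply, smul_eq_mul, Finset.mul_sum]
  exact Finset.sum_congr rfl fun i _ => by ring

lemma inner_mulE (M : Matrix (Fin m) (Fin n) ℝ) (u : EuclideanSpace ℝ (Fin m))
    (v : EuclideanSpace ℝ (Fin n)) : ⟪u, mulE M v⟫ = ⟪mulE Mᵀ u, v⟫ := by
  rw [inner_euc, inner_euc]
  simp only [mulE_apply, Matrix.transpose_apply, Finset.mul_sum, Finset.sum_mul]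
  rw [Finset.sum_comm]
  exact Finset.sum_congr rfl fun j _ => Finset.sum_congr rfl fun i _ => by ring

lemma norm_sq_euc (x : EuclideanSpace ℝ (Fin n)) : ‖x‖ ^ 2 = ∑ i, x i ^ 2 := by
  rw [← real_inner_self_eq_norm_sq, inner_euc]
  exact Finset.sum_congr rfl fun i _ => (sq (x i)).symm



lemma proj_norm_sq (w y : EuclideanSpace ℝ (Fin n)) :
    ‖y - (⟪w, y⟫ / ⟪w, w⟫) • w‖ ^ 2 = ‖y‖ ^ 2 - ⟪w, y⟫ ^ 2 / ‖w‖ ^ 2 := by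
  rcases eq_or_ne w 0 with h | h
  · simp [h]
  · have hw : ⟪w, w⟫ = ‖w‖ ^ 2 := real_inner_self_eq_norm_sq w
    have hw0 : (‖w‖ : ℝ) ^ 2 ≠ 0 := pow_ne_zero 2 (norm_ne_zero_iff.mpr h)
    rw [@norm_sub_sq_real, real_inner_smul_right, norm_smul, mul_pow, real_inner_comm y w, hw]
    rw [Real.norm_eq_abs, sq_abs]
    field_simp
    ring

lemma sphere_nonempty (hn : 0 < n) : Nonempty {v : EuclideanSpace ℝ (Fin n) // ‖v‖ = 1} := by
  refine ⟨⟨EuclideanSpace.single ⟨0, hn⟩ (1 : ℝ), ?_⟩⟩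
  simp [EuclideanSpace.norm_single]

lemma sminE_nonneg (A : Matrix (Fin m) (Fin n) ℝ) : 0 ≤ sminE A :=
  Real.iInf_nonneg fun _ => norm_nonneg _

lemma sminE_le (A : Matrix (Fin m) (Fin n) ℝ) (v : EuclideanSpace ℝ (Fin n)) (hv : ‖v‖ = 1) :
    sminE A ≤ ‖mulE A v‖ := by
  exact ciInf_le ⟨0, by rintro x ⟨i, rfl⟩; exact norm_nonneg _⟩ (⟨v, hv⟩ : {v // ‖v‖ = 1})

lemma sminE_mul_le (A : Matrix (Fin m) (Fin n) ℝ) (y : EuclideanSpace ℝ (Fin n)) :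
    sminE A * ‖y‖ ≤ ‖mulE A y‖ := by
  rcases eq_or_ne y 0 with rfl | hy
  · simp [mulE]
  · have hy0 : (0 : ℝ) < ‖y‖ := norm_pos_iff.mpr hy
    have hv : ‖(‖y‖⁻¹ • y : EuclideanSpace ℝ (Fin n))‖ = 1 := norm_smul_inv_norm hy
    have h1 := sminE_le A _ hv
    rw [mulE_smul, norm_smul, Real.norm_eq_abs, abs_inv, abs_norm] at h1
    calc sminE A * ‖y‖ ≤ (‖y‖⁻¹ * ‖mulE A y‖) * ‖y‖ :=
        mul_le_mul_of_nonneg_right h1 hy0.le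
      _ = ‖mulE A y‖ := by field_simp

lemma norm_mulE_sq_le (M : Matrix (Fin m) (Fin n) ℝ) (v : EuclideanSpace ℝ (Fin n)) :
    ‖mulE M v‖ ^ 2 ≤ (∑ j, ‖rowE M j‖ ^ 2) * ‖v‖ ^ 2 := by
  rw [norm_sq_euc, Finset.sum_mul]
  refine Finset.sum_le_sum fun j _ => ?_
  rw [← inner_rowE, ← sq_abs, ← mul_pow]
  exact pow_le_pow_left₀ (abs_nonneg _) (abs_real_inner_le_norm _ _) 2

lemma lmaxE_bdd (C : Matrix (Fin n) (Fin n) ℝ) :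
    BddAbove (Set.range fun v : {v : EuclideanSpace ℝ (Fin n) // ‖v‖ = 1} =>
      ⟪(v : EuclideanSpace ℝ (Fin n)), mulE C (v : EuclideanSpace ℝ (Fin n))⟫) := by
  refine ⟨Real.sqrt (∑ j, ‖rowE C j‖ ^ 2), ?_⟩
  rintro x ⟨⟨v, hv⟩, rfl⟩
  have h1 : ⟪v, mulE C v⟫ ≤ ‖mulE C v‖ := by
    calc ⟪v, mulE C v⟫ ≤ ‖v‖ * ‖mulE C v‖ := real_inner_le_norm _ _
      _ = ‖mulE C v‖ := by rw [hv, one_mul]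
  refine h1.trans ?_
  have h2 := norm_mulE_sq_le C v
  rw [hv, one_pow, mul_one] at h2
  exact Real.le_sqrt_of_sq_le h2

lemma le_lmaxE (C : Matrix (Fin n) (Fin n) ℝ) (v : EuclideanSpace ℝ (Fin n)) (hv : ‖v‖ = 1) :
    ⟪v, mulE C v⟫ ≤ lmaxE C :=
  le_ciSup (lmaxE_bdd C) (⟨v, hv⟩ : {v // ‖v‖ = 1})

lemma inner_mulE_BBt (B : Matrix (Fin n) (Fin n) ℝ) (v : EuclideanSpace ℝ (Fin n)) :
    ⟪v, mulE (B * Bᵀ) v⟫ = ‖mulE Bᵀ v‖ ^ 2 := by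
  rw [mulE_mul, inner_mulE, real_inner_self_eq_norm_sq]

lemma lmaxE_nonneg (hn : 0 < n) (B : Matrix (Fin n) (Fin n) ℝ) : 0 ≤ lmaxE (B * Bᵀ) := by
  obtain ⟨⟨v, hv⟩⟩ := sphere_nonempty hn
  have := le_lmaxE (B * Bᵀ) v hv
  rw [inner_mulE_BBt] at this
  exact (sq_nonneg _).trans this

lemma norm_mulE_Bt_le (hn : 0 < n) (B : Matrix (Fin n) (Fin n) ℝ) (u : EuclideanSpace ℝ (Fin n)) :
    ‖mulE Bᵀ u‖ ^ 2 ≤ lmaxE (B * Bᵀ) * ‖u‖ ^ 2 := by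
  rcases eq_or_ne u 0 with rfl | hu
  · simp [mulE]
  · have hu0 : (0 : ℝ) < ‖u‖ := norm_pos_iff.mpr hu
    have hv : ‖(‖u‖⁻¹ • u : EuclideanSpace ℝ (Fin n))‖ = 1 := norm_smul_inv_norm hu
    have h1 := le_lmaxE (B * Bᵀ) _ hv
    rw [inner_mulE_BBt, mulE_smul, norm_smul, Real.norm_eq_abs, abs_inv, abs_norm, mul_pow] at h1
    have h2 : (‖u‖⁻¹) ^ 2 * ‖mulE Bᵀ u‖ ^ 2 ≤ lmaxE (B * Bᵀ) := h1
    calc ‖mulE Bᵀ u‖ ^ 2 = ((‖u‖⁻¹) ^ 2 * ‖mulE Bᵀ u‖ ^ 2) * ‖u‖ ^ 2 := by field_simp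
      _ ≤ lmaxE (B * Bᵀ) * ‖u‖ ^ 2 := mul_le_mul_of_nonneg_right h2 (sq_nonneg _)

lemma norm_mulE_B_le (hn : 0 < n) (B : Matrix (Fin n) (Fin n) ℝ) (u : EuclideanSpace ℝ (Fin n)) :
    ‖mulE B u‖ ^ 2 ≤ lmaxE (B * Bᵀ) * ‖u‖ ^ 2 := by
  set z := mulE B u with hz
  rcases eq_or_ne z 0 with h0 | h0
  · rw [h0]; simpa using mul_nonneg (lmaxE_nonneg hn B) (sq_nonneg ‖u‖)
  · have hz2 : (0 : ℝ) < ‖z‖ ^ 2 := pow_pos (norm_pos_iff.mpr h0) 2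
    have h1 : ‖z‖ ^ 2 = ⟪mulE Bᵀ z, u⟫ := by
      rw [← real_inner_self_eq_norm_sq, hz, inner_mulE]
    have h2 : (‖z‖ ^ 2) ^ 2 ≤ ‖mulE Bᵀ z‖ ^ 2 * ‖u‖ ^ 2 := by
      rw [h1, ← sq_abs, ← mul_pow]
      exact pow_le_pow_left₀ (abs_nonneg _) (abs_real_inner_le_norm _ _) 2
    have h3 := norm_mulE_Bt_le hn B z
    nlinarith [sq_nonneg ‖u‖]


section step

variable (A : Matrix (Fin m) (Fin n) ℝ) (B : Matrix (Fin n) (Fin n) ℝ)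
  (b : Fin m → ℝ) (xstar : EuclideanSpace ℝ (Fin n))

lemma step_y (hd : IsUnit B.det) (j : Fin m) (hbj : b j = ⟪rowE A j, xstar⟫)
    (x : EuclideanSpace ℝ (Fin n)) :
    mulE B⁻¹ (apkStep A (B * Bᵀ) b j x - xstar) =
      mulE B⁻¹ (x - xstar) -
        (⟪mulE Bᵀ (rowE A j), mulE B⁻¹ (x - xstar)⟫ /
          ⟪mulE Bᵀ (rowE A j), mulE Bᵀ (rowE A j)⟫) • mulE Bᵀ (rowE A j) := by
  set r := rowE A j
  set w := mulE Bᵀ r with hw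
  set y := mulE B⁻¹ (x - xstar) with hy
  have hBy : mulE B y = x - xstar := by
    rw [hy, ← mulE_mul, Matrix.mul_nonsing_inv B hd, mulE_one]
  have hden : ⟪r, mulE (B * Bᵀ) r⟫ = ⟪w, w⟫ := by
    rw [mulE_mul, inner_mulE]
  have hnum : b j - ⟪r, x⟫ = -⟪w, y⟫ := by
    rw [hw, ← inner_mulE, hBy, inner_sub_right, hbj]; ring
  have hCw : mulE B⁻¹ (mulE (B * Bᵀ) r) = w := by
    rw [← mulE_mul, ← Matrix.mul_assoc, Matrix.nonsing_inv_mul B hd, Matrix.one_mul]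
  have : apkStep A (B * Bᵀ) b j x - xstar =
      (x - xstar) + ((b j - ⟪r, x⟫) / ⟪r, mulE (B * Bᵀ) r⟫) • mulE (B * Bᵀ) r := by
    rw [apkStep]; abel
  rw [this]
  rw [mulE_add, mulE_smul, hCw, hnum, hden, ← hy, neg_div, neg_smul, ← sub_eq_add_neg]

lemma exp_step (hF : 0 < ∑ l, ‖mulE Bᵀ (rowE A l)‖ ^ 2) (y : EuclideanSpace ℝ (Fin n)) :
    ∑ j, (‖mulE Bᵀ (rowE A j)‖ ^ 2 / (∑ l, ‖mulE Bᵀ (rowE A l)‖ ^ 2)) *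
        ‖y - (⟪mulE Bᵀ (rowE A j), y⟫ / ⟪mulE Bᵀ (rowE A j), mulE Bᵀ (rowE A j)⟫) •
          mulE Bᵀ (rowE A j)‖ ^ 2
      ≤ (1 - sminE (A * B) ^ 2 / (∑ l, ‖mulE Bᵀ (rowE A l)‖ ^ 2)) * ‖y‖ ^ 2 := by
  set w : Fin m → EuclideanSpace ℝ (Fin n) := fun j => mulE Bᵀ (rowE A j) with hwdef
  set F : ℝ := ∑ l, ‖w l‖ ^ 2 with hFdef
  have hterm : ∀ j : Fin m, (‖w j‖ ^ 2 / F) *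
      ‖y - (⟪w j, y⟫ / ⟪w j, w j⟫) • w j‖ ^ 2
      = (‖w j‖ ^ 2 * ‖y‖ ^ 2 - ⟪w j, y⟫ ^ 2) / F := by
    intro j
    rw [proj_norm_sq]
    rcases eq_or_ne (w j) 0 with h | h
    · simp [h]
    · have h0 : (‖w j‖ : ℝ) ^ 2 ≠ 0 := pow_ne_zero 2 (norm_ne_zero_iff.mpr h)
      field_simp
  rw [Finset.sum_congr rfl fun j _ => hterm j, ← Finset.sum_div, Finset.sum_sub_distrib,
    ← Finset.sum_mul, ← hFdef]
  have hS : ∑ j, ⟪w j, y⟫ ^ 2 = ‖mulE (A * B) y‖ ^ 2 := by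
    rw [norm_sq_euc]
    refine Finset.sum_congr rfl fun j _ => ?_
    rw [hwdef]
    rw [show ⟪mulE Bᵀ (rowE A j), y⟫ = ⟪rowE A j, mulE B y⟫ from (inner_mulE B (rowE A j) y).symm,
      inner_rowE, ← mulE_mul]
  have hsig : sminE (A * B) ^ 2 * ‖y‖ ^ 2 ≤ ∑ j, ⟪w j, y⟫ ^ 2 := by
    rw [hS, ← mul_pow]
    exact pow_le_pow_left₀ (mul_nonneg (sminE_nonneg _) (norm_nonneg _)) (sminE_mul_le _ _) 2
  have h1 : (F * ‖y‖ ^ 2 - ∑ j, ⟪w j, y⟫ ^ 2) / F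
      ≤ (F * ‖y‖ ^ 2 - sminE (A * B) ^ 2 * ‖y‖ ^ 2) / F :=
    div_le_div_of_nonneg_right (sub_le_sub_left hsig _) hF.le |>.trans_eq rfl
  refine h1.trans_eq ?_
  field_simp

end step

/-- Convergence of the APK algorithm: rows sampled with probability proportional to
`‖Bᵀa_j‖²`, `k - t₀` steps taken from `x_{t₀}`. -/
theorem apk_convergence {m n : ℕ}
    (A : Matrix (Fin m) (Fin n) ℝ) (B : Matrix (Fin n) (Fin n) ℝ)
    (b : Fin m → ℝ) (xstar xt0 : EuclideanSpace ℝ (Fin n))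
    (hrank : A.rank = n) (hB : IsUnit B)
    (hstar : ∀ j, ⟪rowE A j, xstar⟫ = b j) :
    ∀ K : ℕ,
      ∑ ω : Fin K → Fin m,
          (∏ i : Fin K,
            ‖mulE Bᵀ (rowE A (ω i))‖ ^ 2 / (∑ l : Fin m, ‖mulE Bᵀ (rowE A l)‖ ^ 2)) *
            ‖apkIter A (B * Bᵀ) b xt0 K ω - xstar‖ ^ 2
        ≤ lmaxE (B * Bᵀ) *
            (1 - sminE (A * B) ^ 2 / (∑ l : Fin m, ‖mulE Bᵀ (rowE A l)‖ ^ 2)) ^ K *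
            ‖mulE B⁻¹ (xt0 - xstar)‖ ^ 2 := by
  intro K
  rcases Nat.eq_zero_or_pos n with hn0 | hn
  · -- trivial case n = 0
    subst hn0
    have hzero : ∀ (v : EuclideanSpace ℝ (Fin 0)), v = 0 := fun v => Subsingleton.elim v 0
    have hL : ∀ ω : Fin K → Fin m, ‖apkIter A (B * Bᵀ) b xt0 K ω - xstar‖ ^ 2 = 0 := by
      intro ω; rw [hzero (apkIter A (B * Bᵀ) b xt0 K ω - xstar)]; simp
    have hlmax : lmaxE (B * Bᵀ) = 0 := by
      have : IsEmpty {v : EuclideanSpace ℝ (Fin 0) // ‖v‖ = 1} := by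
        refine ⟨fun ⟨v, hv⟩ => ?_⟩
        rw [hzero v, norm_zero] at hv; norm_num at hv
      rw [lmaxE, Real.iSup_of_isEmpty]
    simp only [hlmax, zero_mul]
    exact le_of_eq (Finset.sum_eq_zero fun ω _ => by rw [hL ω, mul_zero])
  · have hd : IsUnit B.det := (Matrix.isUnit_iff_isUnit_det B).mp hB
    set w : Fin m → EuclideanSpace ℝ (Fin n) := fun j => mulE Bᵀ (rowE A j) with hwdef
    set F : ℝ := ∑ l, ‖w l‖ ^ 2 with hFdef
    -- F > 0
    have hF : 0 < F := by
      rcases hFdef ▸ (Finset.sum_nonneg fun l _ => sq_nonneg ‖w l‖).lt_or_eq with h | h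
      · exact h
      · exfalso
        have hall : ∀ l, w l = 0 := by
          intro l
          have := (Finset.sum_eq_zero_iff_of_nonneg
            (fun l _ => sq_nonneg ‖w l‖)).mp h.symm l (Finset.mem_univ l)
          have := (pow_eq_zero_iff two_ne_zero).mp this
          exact norm_eq_zero.mp this
        have hdt : IsUnit Bᵀ.det := by rwa [Matrix.det_transpose]
        have hrow : ∀ l, rowE A l = 0 := by
          intro l
          have h1 : mulE (Bᵀ)⁻¹ (mulE Bᵀ (rowE A l)) = rowE A l := by
            rw [← mulE_mul, Matrix.nonsing_inv_mul Bᵀ hdt, mulE_one]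
          have h2 : mulE Bᵀ (rowE A l) = 0 := hall l
          rw [← h1, h2, mulE_zero]
        have hA0 : A = 0 := by
          ext l i
          have := congrArg (fun v => v i) (hrow l)
          simpa [rowE] using this
        rw [hA0, Matrix.rank_zero] at hrank
        omega
    set r : ℝ := 1 - sminE (A * B) ^ 2 / F with hrdef
    have hr0 : 0 ≤ r := by
      obtain ⟨⟨v0, hv0⟩⟩ := sphere_nonempty hn
      have h1 : sminE (A * B) ≤ ‖mulE (A * B) v0‖ := sminE_le _ _ hv0
      have h2 : ‖mulE (A * B) v0‖ ^ 2 ≤ F := by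
        rw [norm_sq_euc, hFdef]
        refine Finset.sum_le_sum fun j _ => ?_
        have he : mulE (A * B) v0 j = ⟪w j, v0⟫ := by
          rw [hwdef]
          rw [show ⟪mulE Bᵀ (rowE A j), v0⟫ = ⟪rowE A j, mulE B v0⟫ from
            (inner_mulE B _ _).symm, inner_rowE, ← mulE_mul]
        rw [he, ← sq_abs]
        have h3 : |⟪w j, v0⟫| ≤ ‖w j‖ := by
          have := abs_real_inner_le_norm (w j) v0
          rwa [hv0, mul_one] at this
        exact pow_le_pow_left₀ (abs_nonneg _) h3 2
      have hσ2 : sminE (A * B) ^ 2 ≤ F := (pow_le_pow_left₀ (sminE_nonneg _) h1 2).trans h2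
      have h4 : sminE (A * B) ^ 2 / F ≤ 1 := (div_le_one hF).mpr hσ2
      rw [hrdef]; linarith
    have hQ : ∀ (k : ℕ) (ω' : Fin k → Fin m), 0 ≤ ∏ i, ‖w (ω' i)‖ ^ 2 / F :=
      fun k ω' => Finset.prod_nonneg fun i _ => div_nonneg (sq_nonneg _) hF.le
    have key : ∀ k : ℕ,
        ∑ ω : Fin k → Fin m, (∏ i, ‖w (ω i)‖ ^ 2 / F) *
            ‖mulE B⁻¹ (apkIter A (B * Bᵀ) b xt0 k ω - xstar)‖ ^ 2
          ≤ r ^ k * ‖mulE B⁻¹ (xt0 - xstar)‖ ^ 2 := by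
      intro k
      induction k with
      | zero => simp [apkIter]
      | succ k ih =>
        have hsum := (Fin.snocEquiv (fun _ : Fin (k + 1) => Fin m)).sum_comp
          (fun ω : Fin (k + 1) → Fin m => (∏ i, ‖w (ω i)‖ ^ 2 / F) *
            ‖mulE B⁻¹ (apkIter A (B * Bᵀ) b xt0 (k + 1) ω - xstar)‖ ^ 2)
        rw [← hsum, Fintype.sum_prod_type]
        have hterm : ∀ (j : Fin m) (ω' : Fin k → Fin m),
            (∏ i, ‖w ((Fin.snocEquiv (fun _ => Fin m)) (j, ω') i)‖ ^ 2 / F) *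
              ‖mulE B⁻¹ (apkIter A (B * Bᵀ) b xt0 (k + 1)
                ((Fin.snocEquiv (fun _ => Fin m)) (j, ω')) - xstar)‖ ^ 2
            = (∏ i, ‖w (ω' i)‖ ^ 2 / F) * ((‖w j‖ ^ 2 / F) *
                ‖mulE B⁻¹ (apkIter A (B * Bᵀ) b xt0 k ω' - xstar) -
                  (⟪w j, mulE B⁻¹ (apkIter A (B * Bᵀ) b xt0 k ω' - xstar)⟫ / ⟪w j, w j⟫) •
                    w j‖ ^ 2) := by
          intro j ω'
          have hfn : (Fin.snocEquiv (fun _ => Fin m)) (j, ω') = Fin.snoc ω' j := by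
            funext i; rfl
          rw [hfn]
          have hit : apkIter A (B * Bᵀ) b xt0 (k + 1) (Fin.snoc ω' j)
              = apkStep A (B * Bᵀ) b j (apkIter A (B * Bᵀ) b xt0 k ω') := by
            rw [apkIter]
            simp only [Fin.snoc_last, Fin.snoc_castSucc]
          rw [hit, step_y A B b xstar hd j (hstar j).symm, Fin.prod_univ_castSucc]
          simp only [Fin.snoc_castSucc, Fin.snoc_last, hwdef]
          ring
        have hw : ∀ j, mulE Bᵀ (rowE A j) = w j := fun j => by rw [hwdef]
        have hFr2 : (∑ l, ‖w l‖ ^ 2 : ℝ) = F := by rw [hFdef]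
        have hFraw : 0 < ∑ l, ‖mulE Bᵀ (rowE A l)‖ ^ 2 := by
          simpa only [hw, hFr2] using hF
        have hstep : ∀ y : EuclideanSpace ℝ (Fin n),
            ∑ j, (‖w j‖ ^ 2 / F) * ‖y - (⟪w j, y⟫ / ⟪w j, w j⟫) • w j‖ ^ 2
              ≤ r * ‖y‖ ^ 2 := by
          intro y
          rw [hrdef, ← hFr2]
          simpa only [hw] using exp_step A B hFraw y
        refine le_trans (le_of_eq (Finset.sum_congr rfl fun j _ =>
          Finset.sum_congr rfl fun ω' _ => hterm j ω')) ?_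
        rw [Finset.sum_comm]
        have h1 : ∀ ω' : Fin k → Fin m,
            ∑ j, (∏ i, ‖w (ω' i)‖ ^ 2 / F) * ((‖w j‖ ^ 2 / F) *
              ‖mulE B⁻¹ (apkIter A (B * Bᵀ) b xt0 k ω' - xstar) -
                (⟪w j, mulE B⁻¹ (apkIter A (B * Bᵀ) b xt0 k ω' - xstar)⟫ / ⟪w j, w j⟫) •
                  w j‖ ^ 2)
            ≤ (∏ i, ‖w (ω' i)‖ ^ 2 / F) *
                (r * ‖mulE B⁻¹ (apkIter A (B * Bᵀ) b xt0 k ω' - xstar)‖ ^ 2) := by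
          intro ω'
          rw [← Finset.mul_sum]
          exact mul_le_mul_of_nonneg_left (hstep _) (hQ k ω')
        refine le_trans (Finset.sum_le_sum fun ω' _ => h1 ω') ?_
        have h2 : ∑ ω' : Fin k → Fin m, (∏ i, ‖w (ω' i)‖ ^ 2 / F) *
              (r * ‖mulE B⁻¹ (apkIter A (B * Bᵀ) b xt0 k ω' - xstar)‖ ^ 2)
            = r * ∑ ω' : Fin k → Fin m, (∏ i, ‖w (ω' i)‖ ^ 2 / F) *
              ‖mulE B⁻¹ (apkIter A (B * Bᵀ) b xt0 k ω' - xstar)‖ ^ 2 := by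
          rw [Finset.mul_sum]
          exact Finset.sum_congr rfl fun ω' _ => by ring
        rw [h2, pow_succ, mul_comm (r ^ k) r, mul_assoc]
        exact mul_le_mul_of_nonneg_left ih hr0
    -- conclude
    have hw : ∀ j, mulE Bᵀ (rowE A j) = w j := fun j => by rw [hwdef]
    have hFr2 : (∑ l, ‖w l‖ ^ 2 : ℝ) = F := by rw [hFdef]
    have hlm : ∀ ω : Fin K → Fin m,
        ‖apkIter A (B * Bᵀ) b xt0 K ω - xstar‖ ^ 2
          ≤ lmaxE (B * Bᵀ) * ‖mulE B⁻¹ (apkIter A (B * Bᵀ) b xt0 K ω - xstar)‖ ^ 2 := by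
      intro ω
      have h1 : mulE B (mulE B⁻¹ (apkIter A (B * Bᵀ) b xt0 K ω - xstar))
          = apkIter A (B * Bᵀ) b xt0 K ω - xstar := by
        rw [← mulE_mul, Matrix.mul_nonsing_inv B hd, mulE_one]
      conv_lhs => rw [← h1]
      exact norm_mulE_B_le hn B _
    simp only [hw, hFr2]
    refine le_trans (Finset.sum_le_sum fun ω (_ : ω ∈ Finset.univ) =>
      mul_le_mul_of_nonneg_left (hlm ω) (hQ K ω)) ?_
    have h2 : ∑ ω : Fin K → Fin m, (∏ i, ‖w (ω i)‖ ^ 2 / F) *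
          (lmaxE (B * Bᵀ) * ‖mulE B⁻¹ (apkIter A (B * Bᵀ) b xt0 K ω - xstar)‖ ^ 2)
        = lmaxE (B * Bᵀ) * ∑ ω : Fin K → Fin m, (∏ i, ‖w (ω i)‖ ^ 2 / F) *
          ‖mulE B⁻¹ (apkIter A (B * Bᵀ) b xt0 K ω - xstar)‖ ^ 2 := by
      rw [Finset.mul_sum]
      exact Finset.sum_congr rfl fun ω _ => by ring
    rw [h2, mul_assoc]
    exact mul_le_mul_of_nonneg_left (key K) (lmaxE_nonneg hn B)
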